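/- Let P be a positive opetope and P^{op} the dual opetope obtained by interchanging γ and δ on 1-dimensional faces. Then: the sets of flags and p-flags of P and P^{op} coincide; for a flag of dimension k > 1, sgn^{P^{op}}(x⃗) = −sgn^P(x⃗); the pencil over a 0-face carries the reverse linear order while the pencil over a face of positive dimension carries the same order; and the flag order on maximal flags of P^{op} is the reverse of that of P. -/

import Mathlib

open scoped Classical

structure PHg where
  Face : ℕ → Type
  fin : ∀ k, Finite (Face k)
  γ : ∀ k, Face (k+1) → Face k
  δ : ∀ k, Face (k+1) → Face k → Prop
  δ_total : ∀ k a, ∃ x, δ k a x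
  δ0_fun : ∀ (a : Face 1) (x y : Face 0), δ 0 a x → δ 0 a y → x = y
  bounded : ∃ n, ∀ k, n < k → IsEmpty (Face k)

abbrev PHg.FaceS (S : PHg) : Type := Σ k, S.Face k

/-- The codomain operation, viewed on faces of arbitrary dimension
(identity in dimension 0). -/
def gammaS (S : PHg) : S.FaceS → S.FaceS
  | ⟨0, x⟩ => ⟨0, x⟩
  | ⟨k+1, x⟩ => ⟨k, S.γ k x⟩

/-- `x ∈ δ(q)`. -/
def inDelta (S : PHg) (x q : S.FaceS) : Prop :=
  match q with
  | ⟨0, _⟩ => False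
  | ⟨k+1, a⟩ => ∃ h : x.1 = k, S.δ k a (h ▸ x.2)

/-- `x = γ(q)` (for `q` of positive dimension). -/
def inGammaS (S : PHg) (x q : S.FaceS) : Prop := 0 < q.1 ∧ gammaS S q = x

/-- `x ∈ ∂(q) = {γ(q)} ∪ δ(q)`. -/
def inBoundary (S : PHg) (x q : S.FaceS) : Prop := inGammaS S x q ∨ inDelta S x q

def covPlus (S : PHg) (a b : S.FaceS) : Prop :=
  ∃ α, inDelta S a α ∧ gammaS S α = b

/-- The upper order `<⁺`. -/
def ltPlus (S : PHg) : S.FaceS → S.FaceS → Prop := Relation.TransGen (covPlus S)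

def lePlus (S : PHg) (a b : S.FaceS) : Prop := a = b ∨ ltPlus S a b

def perpPlus (S : PHg) (a b : S.FaceS) : Prop := ltPlus S a b ∨ ltPlus S b a

def covMinus (S : PHg) (a b : S.FaceS) : Prop := 0 < a.1 ∧ inDelta S (gammaS S a) b

/-- The lower order `<⁻`. -/
def ltMinus (S : PHg) : S.FaceS → S.FaceS → Prop := Relation.TransGen (covMinus S)

def perpMinus (S : PHg) (a b : S.FaceS) : Prop := ltMinus S a b ∨ ltMinus S b a

/-- Iterated codomain `γ^{(k)}`. -/
def gammaIter (S : PHg) (k : ℕ) (p : S.FaceS) : S.FaceS := (gammaS S)^[p.1 - k] p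

/-- `X` is a `<⁺`-interval. -/
def IntervalPlus (S : PHg) (X : Set S.FaceS) : Prop :=
  X = ∅ ∨ ∃ x0 x1, lePlus S x0 x1 ∧ X = {x | lePlus S x0 x ∧ lePlus S x x1}

def hasDim (S : PHg) (n : ℕ) : Prop :=
  Nonempty (S.Face n) ∧ ∀ k, n < k → IsEmpty (S.Face k)

/-- A positive opetope: a nonempty positive hypergraph satisfying globularity,
strictness, disjointness, pencil linearity, and having at most one face outside
`δ(S_{k+1})` in each dimension. -/
structure IsOpetope (S : PHg) : Prop where
  ne : Nonempty (S.Face 0)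
  glob_gamma : ∀ a : S.FaceS, 2 ≤ a.1 →
    ({gammaS S (gammaS S a)} : Set S.FaceS) =
      {x | ∃ y, inDelta S y a ∧ gammaS S y = x} \ {x | ∃ y, inDelta S y a ∧ inDelta S x y}
  glob_delta : ∀ a : S.FaceS, 2 ≤ a.1 →
    {x | inDelta S x (gammaS S a)} =
      {x | ∃ y, inDelta S y a ∧ inDelta S x y} \ {x | ∃ y, inDelta S y a ∧ gammaS S y = x}
  strict : ∀ a, ¬ ltPlus S a a
  linear0 : ∀ a b : S.FaceS, a.1 = 0 → b.1 = 0 → a = b ∨ perpPlus S a b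
  disj : ∀ a b : S.FaceS, 0 < a.1 → ¬ (perpMinus S a b ∧ perpPlus S a b)
  pencil_gamma : ∀ x a b, inGammaS S x a → inGammaS S x b → a = b ∨ perpPlus S a b
  pencil_delta : ∀ x a b, inDelta S x a → inDelta S x b → a = b ∨ perpPlus S a b
  size_le_one : ∀ k (a b : S.Face k),
    (¬ ∃ α : S.Face (k+1), S.δ k α a) → (¬ ∃ α : S.Face (k+1), S.δ k α b) → a = b
/-- A restricted flag from dimension `m` down to dimension `l`,
encoded as a function `ℕ → S.FaceS` (entries outside `[l,m]` are irrelevant). -/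
def IsRFlag (S : PHg) (m l : ℕ) (F : ℕ → S.FaceS) : Prop :=
  (∀ i, l ≤ i → i ≤ m → (F i).1 = i) ∧
  (∀ i, l ≤ i → i < m → inBoundary S (F i) (F (i+1)))

/-- The pencil order `≺ₓ` on the pencil over `x`. -/
def pencilLt (S : PHg) (x a b : S.FaceS) : Prop :=
  (inGammaS S x b ∧ inDelta S x a) ∨
  (inDelta S x a ∧ inDelta S x b ∧ ltPlus S a b) ∨
  (inGammaS S x a ∧ inGammaS S x b ∧ ltPlus S b a)

/-- The sign of the flag segment `[F j, …, F l]`. -/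
noncomputable def sgnSeg (S : PHg) (l : ℕ) (F : ℕ → S.FaceS) : ℕ → ℤ
  | 0 => 1
  | j+1 => if l ≤ j ∧ inDelta S (F j) (F (j+1)) then -(sgnSeg S l F j) else sgnSeg S l F j

/-- The flag order `◁` on flags from dimension `m` down to `l`. -/
def flagLt (S : PHg) (l m : ℕ) (F G : ℕ → S.FaceS) : Prop :=
  ∃ k, l ≤ k ∧ k ≤ m ∧ (∀ i, l ≤ i → i < k → F i = G i) ∧ F k ≠ G k ∧
    ((k = 0 ∧ ltPlus S (G 0) (F 0)) ∨
     (0 < k ∧ sgnSeg S l F (k-1) = 1 ∧ pencilLt S (F (k-1)) (F k) (G k)) ∨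
     (0 < k ∧ sgnSeg S l F (k-1) = -1 ∧ pencilLt S (F (k-1)) (G k) (F k)))

/-- `i` is the low level `ll` of the flag `F` (with top dimension `n`). -/
def LowLevelT (S : PHg) (n : ℕ) (F : ℕ → S.FaceS) (i : ℕ) : Prop :=
  i + 2 ≤ n ∧ inDelta S (F (i+1)) (F (i+2)) ∧
    ∀ j, i < j → j + 2 ≤ n → ¬ inDelta S (F (j+1)) (F (j+2))

/-- Membership in `Flags[t / b]`, flags from top face `t` (dim `m`) to bottom face `b` (dim `l`). -/
def MemFlags (S : PHg) (l m : ℕ) (t b : S.FaceS) (F : ℕ → S.FaceS) : Prop :=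
  IsRFlag S m l F ∧ F m = t ∧ F l = b

def EqOnFl {α : Type*} (l m : ℕ) (F G : ℕ → α) : Prop :=
  ∀ i, l ≤ i → i ≤ m → F i = G i

/-- `G` is the successor of `F` in `Flags[t / b]` with respect to the flag order. -/
def SuccFl (S : PHg) (l m : ℕ) (t b : S.FaceS) (F G : ℕ → S.FaceS) : Prop :=
  MemFlags S l m t b F ∧ MemFlags S l m t b G ∧ flagLt S l m F G ∧
  ∀ H, MemFlags S l m t b H → flagLt S l m F H → (EqOnFl l m G H ∨ flagLt S l m G H)
/-- The dual positive hypergraph: `γ` and `δ` interchanged on faces of dimension 1. -/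
noncomputable def PHg.dual (S : PHg) : PHg where
  Face := S.Face
  fin := S.fin
  γ := fun k => match k with
    | 0 => fun a => Classical.choose (S.δ_total 0 a)
    | k+1 => S.γ (k+1)
  δ := fun k => match k with
    | 0 => fun a x => S.γ 0 a = x
    | k+1 => S.δ (k+1)
  δ_total := fun k => match k with
    | 0 => fun a => ⟨S.γ 0 a, rfl⟩
    | k+1 => fun a => S.δ_total (k+1) a
  δ0_fun := fun _ _ _ hx hy => hx.symm.trans hy
  bounded := S.bounded


section DualLemmas
variable (S : PHg)

lemma inDelta_dual_succ (k : ℕ) (a : S.Face (k+2)) (x : S.FaceS) :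
    inDelta S.dual x ⟨k+2, a⟩ ↔ inDelta S x ⟨k+2, a⟩ := Iff.rfl

lemma inDelta_dual_one (a : S.Face 1) (x : S.FaceS) :
    inDelta S.dual x ⟨1, a⟩ ↔ gammaS S ⟨1, a⟩ = x := by
  constructor
  · rintro ⟨h, hd⟩
    obtain ⟨k, x2⟩ := x
    cases h
    exact congrArg (fun y => (⟨0, y⟩ : S.FaceS)) hd
  · rintro rfl
    exact ⟨rfl, rfl⟩

lemma inDelta_one_iff_gamma_dual (a : S.Face 1) (x : S.FaceS) :
    inDelta S x ⟨1, a⟩ ↔ gammaS S.dual ⟨1, a⟩ = x := by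
  constructor
  · rintro ⟨h, hd⟩
    obtain ⟨k, x2⟩ := x
    cases h
    have := S.δ0_fun a _ _ (Classical.choose_spec (S.δ_total 0 a)) hd
    exact congrArg (fun y => (⟨0, y⟩ : S.FaceS)) this
  · rintro rfl
    exact ⟨rfl, Classical.choose_spec (S.δ_total 0 a)⟩

/-- dimension of a member of δ(q) -/
lemma inDelta_dim {x q : S.FaceS} (h : inDelta S x q) : x.1 + 1 = q.1 := by
  obtain ⟨k, q2⟩ := q
  cases k with
  | zero => exact absurd h id
  | succ k => obtain ⟨h1, -⟩ := h; simp [h1]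

lemma gammaS_dim (q : S.FaceS) (h : 0 < q.1) : (gammaS S q).1 + 1 = q.1 := by
  obtain ⟨k, q2⟩ := q
  cases k with
  | zero => exact absurd h (by simp)
  | succ k => rfl

lemma inGammaS_dim {x q : S.FaceS} (h : inGammaS S x q) : x.1 + 1 = q.1 := by
  obtain ⟨h0, h1⟩ := h
  rw [← h1]
  exact gammaS_dim S q h0

/-- the four case lemmas depending on dim of x -/
lemma inDelta_dual_zero {x : S.FaceS} (a : S.FaceS) (hx : x.1 = 0) :
    inDelta S.dual x a ↔ inGammaS S x a := by
  obtain ⟨k, a2⟩ := a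
  match k with
  | 0 =>
    constructor
    · intro h; exact absurd (inDelta_dim S.dual h) (by simp)
    · rintro ⟨h, -⟩; exact absurd h (by simp)
  | 1 =>
    refine (inDelta_dual_one S a2 x).trans ?_
    constructor
    · intro h; exact ⟨Nat.one_pos, h⟩
    · rintro ⟨-, h⟩; exact h
  | (k+2) =>
    refine (inDelta_dual_succ S k a2 x).trans ?_
    constructor
    · intro h; have h2 : x.1 + 1 = k + 2 := inDelta_dim S h; omega
    · intro h; have h2 : x.1 + 1 = k + 2 := inGammaS_dim S h; omega

lemma inGammaS_dual_zero {x : S.FaceS} (a : S.FaceS) (hx : x.1 = 0) :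
    inGammaS S.dual x a ↔ inDelta S x a := by
  obtain ⟨k, a2⟩ := a
  match k with
  | 0 =>
    constructor
    · rintro ⟨h, -⟩; exact absurd h (by simp)
    · intro h; exact absurd (inDelta_dim S h) (by simp)
  | 1 =>
    rw [inDelta_one_iff_gamma_dual]
    constructor
    · rintro ⟨-, h⟩; exact h
    · intro h; exact ⟨Nat.one_pos, h⟩
  | (k+2) =>
    constructor
    · intro h; have h2 : x.1 + 1 = k + 2 := inGammaS_dim S.dual h; omega
    · intro h; have h2 : x.1 + 1 = k + 2 := inDelta_dim S h; omega

lemma inDelta_dual_pos {x : S.FaceS} (a : S.FaceS) (hx : 0 < x.1) :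
    inDelta S.dual x a ↔ inDelta S x a := by
  obtain ⟨k, a2⟩ := a
  match k with
  | 0 => exact Iff.rfl
  | 1 =>
    constructor
    · intro h; have h2 : x.1 + 1 = 1 := inDelta_dim S.dual h; omega
    · intro h; have h2 : x.1 + 1 = 1 := inDelta_dim S h; omega
  | (k+2) => exact inDelta_dual_succ S k a2 x

lemma inGammaS_dual_pos {x : S.FaceS} (a : S.FaceS) (hx : 0 < x.1) :
    inGammaS S.dual x a ↔ inGammaS S x a := by
  obtain ⟨k, a2⟩ := a
  match k with
  | 0 =>
    constructor
    · rintro ⟨h, -⟩; exact absurd h (by simp)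
    · rintro ⟨h, -⟩; exact absurd h (by simp)
  | 1 =>
    constructor
    · intro h; have h2 : x.1 + 1 = 1 := inGammaS_dim S.dual h; omega
    · intro h; have h2 : x.1 + 1 = 1 := inGammaS_dim S h; omega
  | (k+2) =>
    unfold inGammaS
    exact Iff.rfl

lemma inBoundary_dual (x a : S.FaceS) : inBoundary S x a ↔ inBoundary S.dual x a := by
  obtain ⟨k, a2⟩ := a
  unfold inBoundary
  match k with
  | 0 =>
    constructor
    · rintro (⟨h, -⟩ | h)
      · exact absurd h (by simp)
      · exact absurd h id
    · rintro (⟨h, -⟩ | h)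
      · exact absurd h (by simp)
      · exact absurd h id
  | 1 =>
    refine (or_congr_right (inDelta_one_iff_gamma_dual S a2 x)).trans
      (Iff.trans ?_ (or_congr_right (inDelta_dual_one S a2 x)).symm)
    constructor
    · rintro (⟨-, h⟩ | h)
      · exact Or.inr h
      · exact Or.inl ⟨Nat.one_pos, h⟩
    · rintro (⟨-, h⟩ | h)
      · exact Or.inr h
      · exact Or.inl ⟨Nat.one_pos, h⟩
  | (k+2) =>
    refine Iff.trans ?_ (or_congr_right (inDelta_dual_succ S k a2 x)).symm
    unfold inGammaS
    exact Iff.rfl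

end DualLemmas

section DualLemmas2
variable (S : PHg)

lemma covPlus_dim {a b : S.FaceS} (h : covPlus S a b) : a.1 = b.1 := by
  obtain ⟨α, hd, hg⟩ := h
  have h1 := inDelta_dim S hd
  have h2 := gammaS_dim S α (by omega)
  rw [hg] at h2
  omega

lemma ltPlus_dim {a b : S.FaceS} (h : ltPlus S a b) : a.1 = b.1 := by
  induction h with
  | single h => exact covPlus_dim S h
  | tail _ h ih => exact ih.trans (covPlus_dim S h)

lemma covPlus_dual_zero {a b : S.FaceS} (ha : a.1 = 0) :
    covPlus S.dual a b ↔ covPlus S b a := by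
  constructor
  · rintro ⟨⟨j, α2⟩, hd, hg⟩
    have hdim : a.1 + 1 = j := inDelta_dim S.dual hd
    have hj : j = 1 := by omega
    subst hj
    exact ⟨⟨1, α2⟩, (inDelta_one_iff_gamma_dual S α2 b).mpr hg,
      (inDelta_dual_one S α2 a).mp hd⟩
  · rintro ⟨⟨j, α2⟩, hd, hg⟩
    have hdim : (gammaS S ⟨j, α2⟩).1 + 1 = j := by
      have hb := inDelta_dim S hd
      exact gammaS_dim S _ (by omega)
    rw [hg] at hdim
    have hj : j = 1 := by omega
    subst hj
    exact ⟨⟨1, α2⟩, (inDelta_dual_one S α2 a).mpr hg,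
      (inDelta_one_iff_gamma_dual S α2 b).mp hd⟩

lemma covPlus_dual_pos {a b : S.FaceS} (ha : 0 < a.1) :
    covPlus S.dual a b ↔ covPlus S a b := by
  constructor
  · rintro ⟨⟨j, α2⟩, hd, hg⟩
    have hdim : a.1 + 1 = j := inDelta_dim S.dual hd
    obtain ⟨k, rfl⟩ : ∃ k, j = k + 2 := ⟨j - 2, by omega⟩
    exact ⟨⟨k+2, α2⟩, (inDelta_dual_succ S k α2 a).mp hd, hg⟩
  · rintro ⟨⟨j, α2⟩, hd, hg⟩
    have hdim : a.1 + 1 = j := inDelta_dim S hd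
    obtain ⟨k, rfl⟩ : ∃ k, j = k + 2 := ⟨j - 2, by omega⟩
    exact ⟨⟨k+2, α2⟩, (inDelta_dual_succ S k α2 a).mpr hd, hg⟩

lemma ltPlus_dual_zero_mp {a b : S.FaceS} (ha : a.1 = 0) (h : ltPlus S.dual a b) :
    ltPlus S b a := by
  induction h with
  | single h => exact Relation.TransGen.single ((covPlus_dual_zero S ha).mp h)
  | tail h1 h2 ih =>
    have hc := (ltPlus_dim S.dual h1).symm.trans ha
    exact Relation.TransGen.head ((covPlus_dual_zero S hc).mp h2) ih

lemma ltPlus_dual_zero_mpr {b a : S.FaceS} (h : ltPlus S b a) :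
    a.1 = 0 → ltPlus S.dual a b := by
  induction h with
  | single h =>
    intro ha; exact Relation.TransGen.single ((covPlus_dual_zero S ha).mpr h)
  | tail h1 h2 ih =>
    intro ha
    have hc := (covPlus_dim S h2).trans ha
    exact Relation.TransGen.head ((covPlus_dual_zero S ha).mpr h2) (ih hc)

lemma ltPlus_dual_zero {a b : S.FaceS} (ha : a.1 = 0) :
    ltPlus S.dual a b ↔ ltPlus S b a :=
  ⟨ltPlus_dual_zero_mp S ha, fun h => ltPlus_dual_zero_mpr S h ha⟩

lemma ltPlus_dual_pos_mp {a b : S.FaceS} (ha : 0 < a.1) (h : ltPlus S.dual a b) :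
    ltPlus S a b := by
  induction h with
  | single h => exact Relation.TransGen.single ((covPlus_dual_pos S ha).mp h)
  | tail h1 h2 ih =>
    have hc : 0 < _ := (ltPlus_dim S.dual h1) ▸ ha
    exact Relation.TransGen.tail ih ((covPlus_dual_pos S hc).mp h2)

lemma ltPlus_dual_pos_mpr {a b : S.FaceS} (ha : 0 < a.1) (h : ltPlus S a b) :
    ltPlus S.dual a b := by
  induction h with
  | single h => exact Relation.TransGen.single ((covPlus_dual_pos S ha).mpr h)
  | tail h1 h2 ih =>
    have hc : 0 < _ := (ltPlus_dim S h1) ▸ ha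
    exact Relation.TransGen.tail ih ((covPlus_dual_pos S hc).mpr h2)

lemma ltPlus_dual_pos {a b : S.FaceS} (ha : 0 < a.1) :
    ltPlus S.dual a b ↔ ltPlus S a b :=
  ⟨ltPlus_dual_pos_mp S ha, ltPlus_dual_pos_mpr S ha⟩

lemma pencilLt_dual_zero {x : S.FaceS} (a b : S.FaceS) (hx : x.1 = 0) :
    pencilLt S.dual x a b ↔ pencilLt S x b a := by
  unfold pencilLt
  rw [inGammaS_dual_zero S a hx, inGammaS_dual_zero S b hx,
    inDelta_dual_zero S a hx, inDelta_dual_zero S b hx]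
  constructor
  · rintro (⟨h1, h2⟩ | ⟨h1, h2, h3⟩ | ⟨h1, h2, h3⟩)
    · exact Or.inl ⟨h2, h1⟩
    · refine Or.inr (Or.inr ⟨h2, h1, ?_⟩)
      have hd : 0 < a.1 := by have := inGammaS_dim S h1; omega
      exact ltPlus_dual_pos_mp S hd h3
    · refine Or.inr (Or.inl ⟨h2, h1, ?_⟩)
      have hd : 0 < b.1 := by have := inDelta_dim S h2; omega
      exact ltPlus_dual_pos_mp S hd h3
  · rintro (⟨h1, h2⟩ | ⟨h1, h2, h3⟩ | ⟨h1, h2, h3⟩)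
    · exact Or.inl ⟨h2, h1⟩
    · refine Or.inr (Or.inr ⟨h2, h1, ?_⟩)
      have hd : 0 < b.1 := by have := inDelta_dim S h1; omega
      exact ltPlus_dual_pos_mpr S hd h3
    · refine Or.inr (Or.inl ⟨h2, h1, ?_⟩)
      have hd : 0 < a.1 := by have := inGammaS_dim S h2; omega
      exact ltPlus_dual_pos_mpr S hd h3

lemma pencilLt_dual_pos {x : S.FaceS} (a b : S.FaceS) (hx : 0 < x.1) :
    pencilLt S.dual x a b ↔ pencilLt S x a b := by
  unfold pencilLt
  rw [inGammaS_dual_pos S a hx, inGammaS_dual_pos S b hx,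
    inDelta_dual_pos S a hx, inDelta_dual_pos S b hx]
  constructor
  · rintro (⟨h1, h2⟩ | ⟨h1, h2, h3⟩ | ⟨h1, h2, h3⟩)
    · exact Or.inl ⟨h1, h2⟩
    · refine Or.inr (Or.inl ⟨h1, h2, ?_⟩)
      have hd : 0 < a.1 := by have := inDelta_dim S h1; omega
      exact ltPlus_dual_pos_mp S hd h3
    · refine Or.inr (Or.inr ⟨h1, h2, ?_⟩)
      have hd : 0 < b.1 := by have := inGammaS_dim S h2; omega
      exact ltPlus_dual_pos_mp S hd h3
  · rintro (⟨h1, h2⟩ | ⟨h1, h2, h3⟩ | ⟨h1, h2, h3⟩)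
    · exact Or.inl ⟨h1, h2⟩
    · refine Or.inr (Or.inl ⟨h1, h2, ?_⟩)
      have hd : 0 < a.1 := by have := inDelta_dim S h1; omega
      exact ltPlus_dual_pos_mpr S hd h3
    · refine Or.inr (Or.inr ⟨h1, h2, ?_⟩)
      have hd : 0 < b.1 := by have := inGammaS_dim S h2; omega
      exact ltPlus_dual_pos_mpr S hd h3

end DualLemmas2

section DualLemmas3
variable (S : PHg)

lemma sgnSeg_zero (l : ℕ) (F : ℕ → S.FaceS) : sgnSeg S l F 0 = 1 := rfl

lemma sgnSeg_succ (l : ℕ) (F : ℕ → S.FaceS) (j : ℕ) :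
    sgnSeg S l F (j+1) =
      if l ≤ j ∧ inDelta S (F j) (F (j+1)) then -(sgnSeg S l F j) else sgnSeg S l F j := rfl

lemma sgnSeg_congr (l : ℕ) (F G : ℕ → S.FaceS) :
    ∀ j, (∀ i, i ≤ j → F i = G i) → sgnSeg S l F j = sgnSeg S l G j := by
  intro j
  induction j with
  | zero => intro _; rfl
  | succ j ih =>
    intro h
    rw [sgnSeg_succ, sgnSeg_succ, ih (fun i hi => h i (by omega)),
      h j (by omega), h (j+1) le_rfl]

lemma isRFlag_mono {m m' : ℕ} {F : ℕ → S.FaceS} (h : IsRFlag S m 0 F) (hm : m' ≤ m) :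
    IsRFlag S m' 0 F :=
  ⟨fun i hi him => h.1 i hi (le_trans him hm),
   fun i hi him => h.2 i hi (lt_of_lt_of_le him hm)⟩

lemma isRFlag_dual (m : ℕ) (F : ℕ → S.FaceS) :
    IsRFlag S m 0 F ↔ IsRFlag S.dual m 0 F := by
  unfold IsRFlag
  refine and_congr Iff.rfl ?_
  constructor
  · intro h i h0 him
    exact (inBoundary_dual S _ _).mp (h i h0 him)
  · intro h i h0 him
    exact (inBoundary_dual S _ _).mpr (h i h0 him)

lemma sgnSeg_dual (hS : IsOpetope S) {m : ℕ} {F : ℕ → S.FaceS} (hF : IsRFlag S m 0 F) :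
    ∀ j, 1 ≤ j → j ≤ m → sgnSeg S.dual 0 F j = -(sgnSeg S 0 F j) := by
  intro j
  induction j with
  | zero => omega
  | succ j ih =>
    intro h1 h2
    rcases Nat.eq_zero_or_pos j with hj | hj
    · subst hj
      have hx0 : (F 0).1 = 0 := hF.1 0 le_rfl (by omega)
      have hb : inBoundary S (F 0) (F 1) := hF.2 0 le_rfl (by omega)
      have hkey : inDelta S.dual (F 0) (F 1) ↔ ¬ inDelta S (F 0) (F 1) := by
        rw [inDelta_dual_zero S _ hx0]
        constructor
        · intro hg hd
          exact hS.strict (F 0) (Relation.TransGen.single ⟨F 1, hd, hg.2⟩)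
        · intro hnd
          rcases hb with hg | hd
          · exact hg
          · exact absurd hd hnd
      by_cases hd : inDelta S (F 0) (F 1)
      · have hd' : ¬ inDelta S.dual (F 0) (F 1) := fun h => (hkey.mp h) hd
        rw [sgnSeg_succ S.dual 0 F 0]
        simp [sgnSeg_succ, sgnSeg_zero, sgnSeg_zero S.dual 0 F, hd, hd']
      · have hd' : inDelta S.dual (F 0) (F 1) := hkey.mpr hd
        rw [sgnSeg_succ S.dual 0 F 0]
        simp [sgnSeg_succ, sgnSeg_zero, sgnSeg_zero S.dual 0 F, hd, hd']
    · have ih' := ih hj (by omega)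
      have hxj : (F j).1 = j := hF.1 j (by omega) (by omega)
      have hcond : inDelta S.dual (F j) (F (j+1)) ↔ inDelta S (F j) (F (j+1)) :=
        inDelta_dual_pos S _ (by omega)
      by_cases hd : inDelta S (F j) (F (j+1))
      · have hd' := hcond.mpr hd
        rw [sgnSeg_succ S.dual 0 F j]
        simp [sgnSeg_succ, hd, hd', ih']
      · have hd' : ¬ inDelta S.dual (F j) (F (j+1)) := fun h => hd (hcond.mp h)
        rw [sgnSeg_succ S.dual 0 F j]
        simp [sgnSeg_succ, hd, hd', ih']

lemma lowLevelT_dual {m : ℕ} {F : ℕ → S.FaceS} (hF : IsRFlag S m 0 F) (i : ℕ) :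
    LowLevelT S m F i ↔ LowLevelT S.dual m F i := by
  unfold LowLevelT
  have key : ∀ j, j + 2 ≤ m →
      (inDelta S.dual (F (j+1)) (F (j+2)) ↔ inDelta S (F (j+1)) (F (j+2))) := by
    intro j hj
    refine inDelta_dual_pos S _ ?_
    have := hF.1 (j+1) (by omega) (by omega)
    omega
  constructor
  · rintro ⟨h1, h2, h3⟩
    exact ⟨h1, (key i h1).mpr h2, fun j hji hj hd => h3 j hji hj ((key j hj).mp hd)⟩
  · rintro ⟨h1, h2, h3⟩
    exact ⟨h1, (key i h1).mp h2, fun j hji hj hd => h3 j hji hj ((key j hj).mpr hd)⟩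

lemma flagLt_dual_mp (hS : IsOpetope S) {n : ℕ} {F G : ℕ → S.FaceS}
    (hF : IsRFlag S n 0 F) (hG : IsRFlag S n 0 G)
    (h : flagLt S.dual 0 n F G) : flagLt S 0 n G F := by
  obtain ⟨k, hk0, hkn, hagree, hne, hcase⟩ := h
  refine ⟨k, hk0, hkn, fun i h0 hik => (hagree i h0 hik).symm, fun e => hne e.symm, ?_⟩
  rcases hcase with ⟨hk, hlt⟩ | ⟨hk, hsgn, hp⟩ | ⟨hk, hsgn, hp⟩
  · subst hk
    have hg0 : (G 0).1 = 0 := hG.1 0 le_rfl (by omega)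
    exact Or.inl ⟨rfl, ltPlus_dual_zero_mp S hg0 hlt⟩
  · rcases Nat.lt_or_ge k 2 with hk2 | hk2
    · have hk1 : k = 1 := by omega
      subst hk1
      have hFG0 : F 0 = G 0 := hagree 0 le_rfl Nat.one_pos
      have hx0 : (F 0).1 = 0 := hF.1 0 le_rfl (by omega)
      have hp' : pencilLt S (F 0) (G 1) (F 1) :=
        (pencilLt_dual_zero S _ _ hx0).mp hp
      refine Or.inr (Or.inl ⟨Nat.one_pos, sgnSeg_zero S 0 G, ?_⟩)
      rw [← hFG0]
      exact hp'
    · have hxk : (F (k-1)).1 = k-1 := hF.1 (k-1) (by omega) (by omega)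
      have hp' : pencilLt S (F (k-1)) (F k) (G k) :=
        (pencilLt_dual_pos S _ _ (by omega)).mp hp
      have hsd := sgnSeg_dual S hS (isRFlag_mono S hF (by omega : k-1 ≤ n))
        (k-1) (by omega) le_rfl
      have hsF : sgnSeg S 0 F (k-1) = -1 := by omega
      have hsG : sgnSeg S 0 G (k-1) = -1 := by
        rw [← sgnSeg_congr S 0 F G (k-1) (fun i hi => hagree i (by omega) (by omega))]
        exact hsF
      refine Or.inr (Or.inr ⟨hk, hsG, ?_⟩)
      rw [show G (k-1) = F (k-1) from (hagree (k-1) (by omega) (by omega)).symm]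
      exact hp'
  · rcases Nat.lt_or_ge k 2 with hk2 | hk2
    · have hk1 : k = 1 := by omega
      subst hk1
      rw [show (1:ℕ) - 1 = 0 from rfl, sgnSeg_zero S.dual 0 F] at hsgn
      omega
    · have hxk : (F (k-1)).1 = k-1 := hF.1 (k-1) (by omega) (by omega)
      have hp' : pencilLt S (F (k-1)) (G k) (F k) :=
        (pencilLt_dual_pos S _ _ (by omega)).mp hp
      have hsd := sgnSeg_dual S hS (isRFlag_mono S hF (by omega : k-1 ≤ n))
        (k-1) (by omega) le_rfl
      have hsF : sgnSeg S 0 F (k-1) = 1 := by omega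
      have hsG : sgnSeg S 0 G (k-1) = 1 := by
        rw [← sgnSeg_congr S 0 F G (k-1) (fun i hi => hagree i (by omega) (by omega))]
        exact hsF
      refine Or.inr (Or.inl ⟨hk, hsG, ?_⟩)
      rw [show G (k-1) = F (k-1) from (hagree (k-1) (by omega) (by omega)).symm]
      exact hp'

lemma flagLt_dual_mpr (hS : IsOpetope S) {n : ℕ} {F G : ℕ → S.FaceS}
    (hF : IsRFlag S n 0 F) (hG : IsRFlag S n 0 G)
    (h : flagLt S 0 n G F) : flagLt S.dual 0 n F G := by
  obtain ⟨k, hk0, hkn, hagree, hne, hcase⟩ := h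
  refine ⟨k, hk0, hkn, fun i h0 hik => (hagree i h0 hik).symm, fun e => hne e.symm, ?_⟩
  rcases hcase with ⟨hk, hlt⟩ | ⟨hk, hsgn, hp⟩ | ⟨hk, hsgn, hp⟩
  · subst hk
    have hg0 : (G 0).1 = 0 := hG.1 0 le_rfl (by omega)
    exact Or.inl ⟨rfl, ltPlus_dual_zero_mpr S hlt hg0⟩
  · rcases Nat.lt_or_ge k 2 with hk2 | hk2
    · have hk1 : k = 1 := by omega
      subst hk1
      have hFG0 : G 0 = F 0 := hagree 0 le_rfl Nat.one_pos
      have hx0 : (F 0).1 = 0 := hF.1 0 le_rfl (by omega)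
      refine Or.inr (Or.inl ⟨Nat.one_pos, sgnSeg_zero S.dual 0 F, ?_⟩)
      refine (pencilLt_dual_zero S _ _ hx0).mpr ?_
      rw [← hFG0]
      exact hp
    · have hxk : (F (k-1)).1 = k-1 := hF.1 (k-1) (by omega) (by omega)
      have hGF : G (k-1) = F (k-1) := hagree (k-1) (by omega) (by omega)
      have hsF : sgnSeg S 0 F (k-1) = 1 := by
        rw [sgnSeg_congr S 0 F G (k-1) (fun i hi => (hagree i (by omega) (by omega)).symm)]
        exact hsgn
      have hsd := sgnSeg_dual S hS (isRFlag_mono S hF (by omega : k-1 ≤ n))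
        (k-1) (by omega) le_rfl
      have hsd1 : sgnSeg S.dual 0 F (k-1) = -1 := by omega
      refine Or.inr (Or.inr ⟨hk, hsd1, ?_⟩)
      refine (pencilLt_dual_pos S _ _ (by omega)).mpr ?_
      rw [← hGF]
      exact hp
  · rcases Nat.lt_or_ge k 2 with hk2 | hk2
    · have hk1 : k = 1 := by omega
      subst hk1
      rw [show (1:ℕ) - 1 = 0 from rfl, sgnSeg_zero] at hsgn
      omega
    · have hxk : (F (k-1)).1 = k-1 := hF.1 (k-1) (by omega) (by omega)
      have hGF : G (k-1) = F (k-1) := hagree (k-1) (by omega) (by omega)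
      have hsF : sgnSeg S 0 F (k-1) = -1 := by
        rw [sgnSeg_congr S 0 F G (k-1) (fun i hi => (hagree i (by omega) (by omega)).symm)]
        exact hsgn
      have hsd := sgnSeg_dual S hS (isRFlag_mono S hF (by omega : k-1 ≤ n))
        (k-1) (by omega) le_rfl
      have hsd1 : sgnSeg S.dual 0 F (k-1) = 1 := by omega
      refine Or.inr (Or.inl ⟨hk, hsd1, ?_⟩)
      refine (pencilLt_dual_pos S _ _ (by omega)).mpr ?_
      rw [← hGF]
      exact hp

end DualLemmas3
/-- Flags and p-flags of `P` and of its dual `P^op` coincide; the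
sign of a flag of dimension `> 1` flips; the pencil over a 0-face carries the
reverse order while pencils over faces of positive dimension carry the same
order; and the flag order on maximal flags is reversed. -/
theorem dual_flags_signs_pencils_order
    (S : PHg) (hS : IsOpetope S) (n : ℕ) (hn : hasDim S n) :
    (∀ (m : ℕ) (F : ℕ → S.FaceS), IsRFlag S m 0 F ↔ IsRFlag S.dual m 0 F) ∧
    (∀ (m i : ℕ) (F : ℕ → S.FaceS),
      (IsRFlag S m 0 F ∧ (i + 1 = m ∨ LowLevelT S m F i)) ↔
      (IsRFlag S.dual m 0 F ∧ (i + 1 = m ∨ LowLevelT S.dual m F i))) ∧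
    (∀ (m : ℕ) (F : ℕ → S.FaceS), IsRFlag S m 0 F → 1 ≤ m →
      sgnSeg S.dual 0 F m = -(sgnSeg S 0 F m)) ∧
    (∀ x a : S.FaceS, inBoundary S x a ↔ inBoundary S.dual x a) ∧
    (∀ x a b : S.FaceS, x.1 = 0 → inBoundary S x a → inBoundary S x b →
      (pencilLt S.dual x a b ↔ pencilLt S x b a)) ∧
    (∀ x a b : S.FaceS, 0 < x.1 → inBoundary S x a → inBoundary S x b →
      (pencilLt S.dual x a b ↔ pencilLt S x a b)) ∧
    (∀ F G : ℕ → S.FaceS, IsRFlag S n 0 F → IsRFlag S n 0 G →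
      (flagLt S.dual 0 n F G ↔ flagLt S 0 n G F)) := by
  refine ⟨fun m F => isRFlag_dual S m F, ?_, ?_, fun x a => inBoundary_dual S x a,
    fun x a b hx _ _ => pencilLt_dual_zero S a b hx,
    fun x a b hx _ _ => pencilLt_dual_pos S a b hx,
    fun F G hF hG => ⟨flagLt_dual_mp S hS hF hG, flagLt_dual_mpr S hS hF hG⟩⟩
  · intro m i F
    constructor
    · rintro ⟨h1, h2⟩
      exact ⟨(isRFlag_dual S m F).mp h1, h2.imp id (lowLevelT_dual S h1 i).mp⟩
    · rintro ⟨h1, h2⟩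
      have h1' := (isRFlag_dual S m F).mpr h1
      exact ⟨h1', h2.imp id (lowLevelT_dual S h1' i).mpr⟩
  · intro m F hF hm
    exact sgnSeg_dual S hS hF m hm le_rfl
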